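/- arXiv:0806.1652 — 4 statements merged into one kernel-verified Lean document; each statement's English description precedes it below -/
import Mathlib

section
/- For every n ≥ 1, every tuning parameter η_n > 0 and all nonnegative real numbers a_n and b_n, the infimal coverage probability of the interval C_{S,n} = [θ̂_S − a_n, θ̂_S + b_n] is given by inf_{θ∈ℝ} P_{n,θ}(θ ∈ C_{S,n}) = Φ(n^{1/2}(a_n − η_n)) − Φ(n^{1/2}(−b_n − η_n)) if a_n ≤ b_n, and = Φ(n^{1/2}(b_n − η_n)) − Φ(n^{1/2}(−a_n − η_n)) if a_n > b_n. -/
open MeasureTheory ProbabilityTheory Filter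
open scoped NNReal

/-- Standard normal cumulative distribution function Φ. -/
noncomputable def stdNormCDF (x : ℝ) : ℝ :=
  ((gaussianReal 0 1) (Set.Iic x)).toReal

/-- Soft-thresholding (LASSO) estimator with threshold η, as a function of ȳ. -/
noncomputable def softThresh (η y : ℝ) : ℝ := Real.sign y * max (|y| - η) 0

/-- Hard-thresholding estimator with threshold η, as a function of ȳ. -/
noncomputable def hardThresh (η y : ℝ) : ℝ := if η < |y| then y else 0

/-- Adaptive LASSO estimator with tuning parameter η, as a function of ȳ. -/
noncomputable def adaLasso (η y : ℝ) : ℝ := if |y| ≤ η then 0 else y - η ^ 2 / y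

/-- Coverage probability `P_{n,θ}(θ ∈ [est(ȳ) - a, est(ȳ) + b])` in the
known-variance case (σ = 1), where ȳ ~ N(θ, 1/n). -/
noncomputable def cover (n : ℕ) (est : ℝ → ℝ) (a b θ : ℝ) : ℝ :=
  ((gaussianReal θ ((n : ℝ≥0))⁻¹)
    {y : ℝ | est y - a ≤ θ ∧ θ ≤ est y + b}).toReal

lemma st_cases {η : ℝ} (hη : 0 < η) (y : ℝ) :
    softThresh η y = if η < y then y - η else if y < -η then y + η else 0 := by
  unfold softThresh
  rcases lt_trichotomy y 0 with h | h | h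
  · rw [Real.sign_of_neg h, abs_of_neg h]
    split_ifs with h1 h2 <;> [linarith; skip; skip]
    · rw [max_eq_left (by linarith)]; ring
    · rw [max_eq_right (by linarith)]; ring
  · simp [h, Real.sign_zero]; split_ifs with h1 <;> [linarith; rfl]
  · rw [Real.sign_of_pos h, abs_of_pos h]
    split_ifs with h1 h2 <;> [skip; linarith; skip]
    · rw [max_eq_left (by linarith)]; ring
    · rw [max_eq_right (by linarith)]; ring

lemma le_st_pos {η c : ℝ} (hη : 0 < η) (hc : 0 < c) (y : ℝ) :
    c ≤ softThresh η y ↔ c + η ≤ y := by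
  rw [st_cases hη]; split_ifs with h1 h2 <;> constructor <;> intro h <;> linarith

lemma le_st_nonpos {η c : ℝ} (hη : 0 < η) (hc : c ≤ 0) (y : ℝ) :
    c ≤ softThresh η y ↔ c - η ≤ y := by
  rw [st_cases hη]; split_ifs with h1 h2 <;> constructor <;> intro h <;> linarith

lemma st_le_nonneg {η d : ℝ} (hη : 0 < η) (hd : 0 ≤ d) (y : ℝ) :
    softThresh η y ≤ d ↔ y ≤ d + η := by
  rw [st_cases hη]; split_ifs with h1 h2 <;> constructor <;> intro h <;> linarith

lemma st_le_neg {η d : ℝ} (hη : 0 < η) (hd : d < 0) (y : ℝ) :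
    softThresh η y ≤ d ↔ y ≤ d - η := by
  rw [st_cases hη]; split_ifs with h1 h2 <;> constructor <;> intro h <;> linarith

lemma gauss_singleton (x : ℝ) : gaussianReal 0 1 {x} = 0 :=
  gaussianReal_absolutelyContinuous 0 one_ne_zero (Real.volume_singleton)

lemma stdNormCDF_mono : Monotone stdNormCDF := by
  intro x y hxy
  unfold stdNormCDF
  exact ENNReal.toReal_mono (measure_ne_top _ _) (measure_mono (Set.Iic_subset_Iic.2 hxy))

lemma stdNormCDF_nonneg (x : ℝ) : 0 ≤ stdNormCDF x := ENNReal.toReal_nonneg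

lemma gauss_meas_Ioc {α β : ℝ} (h : α ≤ β) :
    ((gaussianReal 0 1) (Set.Ioc α β)).toReal = stdNormCDF β - stdNormCDF α := by
  have hsub : Set.Iic α ⊆ Set.Iic β := Set.Iic_subset_Iic.2 h
  have hd : gaussianReal 0 1 (Set.Iic β \ Set.Iic α)
      = gaussianReal 0 1 (Set.Iic β) - gaussianReal 0 1 (Set.Iic α) :=
    measure_diff hsub measurableSet_Iic.nullMeasurableSet (measure_ne_top _ _)
  rw [Set.Iic_sdiff_Iic] at hd
  rw [hd, ENNReal.toReal_sub_of_le (measure_mono hsub) (measure_ne_top _ _)]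
  rfl

lemma gauss_meas_Icc {α β : ℝ} (h : α ≤ β) :
    ((gaussianReal 0 1) (Set.Icc α β)).toReal = stdNormCDF β - stdNormCDF α := by
  rw [← gauss_meas_Ioc h]
  congr 1
  refine le_antisymm ?_ (measure_mono Set.Ioc_subset_Icc_self)
  calc gaussianReal 0 1 (Set.Icc α β) = gaussianReal 0 1 (insert α (Set.Ioc α β)) := by
        rw [Set.Ioc_insert_left h]
    _ ≤ gaussianReal 0 1 {α} + gaussianReal 0 1 (Set.Ioc α β) := by
        rw [Set.insert_eq]; exact measure_union_le _ _
    _ = gaussianReal 0 1 (Set.Ioc α β) := by rw [gauss_singleton, zero_add]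

lemma gauss_map (n : ℕ) (hn : 1 ≤ n) (θ : ℝ) :
    gaussianReal θ ((n : ℝ≥0))⁻¹
      = (gaussianReal 0 1).map (fun x => (Real.sqrt n)⁻¹ * x + θ) := by
  have hs : (0:ℝ) < Real.sqrt n := Real.sqrt_pos.2 (by exact_mod_cast Nat.pos_of_ne_zero (by omega))
  have h1 : (gaussianReal 0 1).map ((Real.sqrt n)⁻¹ * ·)
      = gaussianReal 0 ((n : ℝ≥0))⁻¹ := by
    rw [gaussianReal_map_const_mul]
    congr 1
    · ring
    · rw [mul_one]
      ext
      push_cast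
      rw [← Real.sqrt_inv, Real.sq_sqrt (by positivity)]
  have h2 : (gaussianReal 0 ((n : ℝ≥0))⁻¹).map (· + θ) = gaussianReal θ ((n : ℝ≥0))⁻¹ := by
    rw [gaussianReal_map_add_const, zero_add]
  rw [← h2, ← h1, Measure.map_map (measurable_add_const θ) (measurable_const_mul _)]
  rfl

lemma cover_meas (n : ℕ) (hn : 1 ≤ n) (θ L U : ℝ) (h : L ≤ U) :
    ((gaussianReal θ ((n : ℝ≥0))⁻¹) (Set.Icc L U)).toReal
      = stdNormCDF (Real.sqrt n * (U - θ)) - stdNormCDF (Real.sqrt n * (L - θ)) := by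
  have hs : (0:ℝ) < Real.sqrt n := Real.sqrt_pos.2 (by exact_mod_cast Nat.pos_of_ne_zero (by omega))
  have hc : Real.sqrt n * (Real.sqrt n)⁻¹ = 1 := mul_inv_cancel₀ hs.ne'
  rw [gauss_map n hn θ, Measure.map_apply (by fun_prop) measurableSet_Icc]
  have hpre : (fun x => (Real.sqrt n)⁻¹ * x + θ) ⁻¹' Set.Icc L U
      = Set.Icc (Real.sqrt n * (L - θ)) (Real.sqrt n * (U - θ)) := by
    ext x
    simp only [Set.mem_preimage, Set.mem_Icc]
    have key : ∀ z w : ℝ, Real.sqrt n * z ≤ w ↔ z ≤ (Real.sqrt n)⁻¹ * w := by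
      intro z w
      rw [mul_comm, ← le_div_iff₀ hs, div_eq_inv_mul]
    have key2 : ∀ z w : ℝ, w ≤ Real.sqrt n * z ↔ (Real.sqrt n)⁻¹ * w ≤ z := by
      intro z w
      rw [mul_comm, ← div_le_iff₀ hs, div_eq_inv_mul]
    rw [key, key2]
    constructor <;> rintro ⟨h1, h2⟩ <;> constructor <;> linarith
  rw [hpre, gauss_meas_Icc (by nlinarith)]

lemma stdNormCDF_neg (x : ℝ) : stdNormCDF (-x) = 1 - stdNormCDF x := by
  have hmap : (gaussianReal 0 1).map ((-1 : ℝ) * ·) = gaussianReal 0 1 := by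
    rw [gaussianReal_map_const_mul]
    congr 1
    · norm_num
    · ext
      norm_num
  have h1 : gaussianReal 0 1 (Set.Iic (-x)) = gaussianReal 0 1 (Set.Ici x) := by
    conv_lhs => rw [← hmap]
    rw [Measure.map_apply (measurable_const_mul _) measurableSet_Iic]
    congr 1
    ext y
    simp only [Set.mem_preimage, Set.mem_Iic, Set.mem_Ici]
    constructor <;> intro <;> linarith
  have h2 : gaussianReal 0 1 (Set.Ici x) = 1 - gaussianReal 0 1 (Set.Iio x) := by
    rw [← Set.compl_Iio, measure_compl measurableSet_Iio (measure_ne_top _ _), measure_univ]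
  have h3 : gaussianReal 0 1 (Set.Iio x) = gaussianReal 0 1 (Set.Iic x) := by
    refine le_antisymm (measure_mono Set.Iio_subset_Iic_self) ?_
    calc gaussianReal 0 1 (Set.Iic x) = gaussianReal 0 1 (insert x (Set.Iio x)) := by
          rw [Set.Iio_insert]
      _ ≤ gaussianReal 0 1 {x} + gaussianReal 0 1 (Set.Iio x) := by
          rw [Set.insert_eq]; exact measure_union_le _ _
      _ = gaussianReal 0 1 (Set.Iio x) := by rw [gauss_singleton, zero_add]
  unfold stdNormCDF
  rw [h1, h2, h3, ENNReal.toReal_sub_of_le prob_le_one (by norm_num)]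
  norm_num

lemma Phi_sub_integral (α β : ℝ) (h : α ≤ β) :
    stdNormCDF β - stdNormCDF α = ∫ t in α..β, gaussianPDFReal 0 1 t := by
  rw [← gauss_meas_Ioc h, gaussianReal_apply_eq_integral 0 one_ne_zero,
    ENNReal.toReal_ofReal (setIntegral_nonneg measurableSet_Ioc
      (fun x _ => gaussianPDFReal_nonneg 0 1 x)),
    intervalIntegral.integral_of_le h]

lemma shift_le {δ α β : ℝ} (hδ : 0 ≤ δ) (hα : -(δ/2) ≤ α) (hαβ : α ≤ β) :
    stdNormCDF (β + δ) - stdNormCDF (α + δ) ≤ stdNormCDF β - stdNormCDF α := by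
  rw [Phi_sub_integral _ _ (by linarith), Phi_sub_integral _ _ hαβ]
  have hcomp : ∫ t in (α+δ)..(β+δ), gaussianPDFReal 0 1 t
      = ∫ t in α..β, gaussianPDFReal 0 1 (t + δ) := by
    rw [← intervalIntegral.integral_comp_add_right]
  rw [hcomp]
  apply intervalIntegral.integral_mono_on hαβ
  · exact ((integrable_gaussianPDFReal 0 1).comp_add_right δ).intervalIntegrable
  · exact (integrable_gaussianPDFReal 0 1).intervalIntegrable
  · intro x hx
    simp only [gaussianPDFReal]
    apply mul_le_mul_of_nonneg_left _ (by positivity)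
    apply Real.exp_le_exp.2
    have hx1 : α ≤ x := hx.1
    norm_num
    nlinarith

lemma set_reform (η a b θ : ℝ) :
    {y : ℝ | softThresh η y - a ≤ θ ∧ θ ≤ softThresh η y + b}
      = {y : ℝ | θ - b ≤ softThresh η y ∧ softThresh η y ≤ θ + a} := by
  ext y
  simp only [Set.mem_setOf_eq]
  constructor <;> rintro ⟨u, v⟩ <;> exact ⟨by linarith, by linarith⟩

lemma cover_mid {n : ℕ} (hn : 1 ≤ n) {η : ℝ} (hη : 0 < η) {a b θ : ℝ}
    (ha : 0 ≤ a) (hb : 0 ≤ b) (h1 : -a ≤ θ) (h2 : θ ≤ b) :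
    cover n (softThresh η) a b θ
      = stdNormCDF (Real.sqrt n * (a + η)) - stdNormCDF (Real.sqrt n * (-b - η)) := by
  unfold cover
  rw [set_reform]
  have hset : {y : ℝ | θ - b ≤ softThresh η y ∧ softThresh η y ≤ θ + a}
      = Set.Icc (θ - b - η) (θ + a + η) := by
    ext y
    simp only [Set.mem_setOf_eq, Set.mem_Icc]
    rw [le_st_nonpos hη (by linarith), st_le_nonneg hη (by linarith)]
  rw [hset, cover_meas n hn θ _ _ (by linarith)]
  congr 1 <;> congr 1 <;> ring

lemma cover_right {n : ℕ} (hn : 1 ≤ n) {η : ℝ} (hη : 0 < η) {a b θ : ℝ}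
    (ha : 0 ≤ a) (hb : 0 ≤ b) (h2 : b < θ) :
    cover n (softThresh η) a b θ
      = stdNormCDF (Real.sqrt n * (a + η)) - stdNormCDF (Real.sqrt n * (-b + η)) := by
  unfold cover
  rw [set_reform]
  have hset : {y : ℝ | θ - b ≤ softThresh η y ∧ softThresh η y ≤ θ + a}
      = Set.Icc (θ - b + η) (θ + a + η) := by
    ext y
    simp only [Set.mem_setOf_eq, Set.mem_Icc]
    rw [le_st_pos hη (by linarith), st_le_nonneg hη (by linarith)]
  rw [hset, cover_meas n hn θ _ _ (by linarith)]
  congr 1 <;> congr 1 <;> ring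

lemma cover_left {n : ℕ} (hn : 1 ≤ n) {η : ℝ} (hη : 0 < η) {a b θ : ℝ}
    (ha : 0 ≤ a) (hb : 0 ≤ b) (h1 : θ < -a) :
    cover n (softThresh η) a b θ
      = stdNormCDF (Real.sqrt n * (a - η)) - stdNormCDF (Real.sqrt n * (-b - η)) := by
  unfold cover
  rw [set_reform]
  have hset : {y : ℝ | θ - b ≤ softThresh η y ∧ softThresh η y ≤ θ + a}
      = Set.Icc (θ - b - η) (θ + a - η) := by
    ext y
    simp only [Set.mem_setOf_eq, Set.mem_Icc]
    rw [le_st_nonpos hη (by linarith), st_le_neg hη (by linarith)]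
  rw [hset, cover_meas n hn θ _ _ (by linarith)]
  congr 1 <;> congr 1 <;> ring

lemma right_val (s η a b : ℝ) :
    stdNormCDF (s * (a + η)) - stdNormCDF (s * (-b + η))
      = stdNormCDF (s * (b - η)) - stdNormCDF (s * (-a - η)) := by
  have e1 : s * (-a - η) = -(s * (a + η)) := by ring
  have e2 : s * (-b + η) = -(s * (b - η)) := by ring
  rw [e1, e2, stdNormCDF_neg, stdNormCDF_neg]
  ring

lemma comp_le {s η a b : ℝ} (hs : 0 < s) (hη : 0 < η) (ha : 0 ≤ a) (hab : a ≤ b) :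
    stdNormCDF (s * (a - η)) - stdNormCDF (s * (-b - η))
      ≤ stdNormCDF (s * (b - η)) - stdNormCDF (s * (-a - η)) := by
  have h := shift_le (δ := 2*s*η) (α := s*(a-η)) (β := s*(b-η))
    (by positivity) (by nlinarith) (by nlinarith)
  have e1 : s*(b-η) + 2*s*η = -(s*(-b-η)) := by ring
  have e2 : s*(a-η) + 2*s*η = -(s*(-a-η)) := by ring
  rw [e1, e2, stdNormCDF_neg, stdNormCDF_neg] at h
  linarith

/-- Proposition 1 (soft-thresholding): the infimal coverage probability of
`C_{S,n} = [θ̂_S - a, θ̂_S + b]`. -/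
theorem stmt_0 (n : ℕ) (hn : 1 ≤ n) (η a b : ℝ) (hη : 0 < η) (ha : 0 ≤ a) (hb : 0 ≤ b) :
    (⨅ θ : ℝ, cover n (softThresh η) a b θ) =
      if a ≤ b then
        stdNormCDF (Real.sqrt n * (a - η)) - stdNormCDF (Real.sqrt n * (-b - η))
      else
        stdNormCDF (Real.sqrt n * (b - η)) - stdNormCDF (Real.sqrt n * (-a - η)) := by
  have hs : (0:ℝ) < Real.sqrt n := Real.sqrt_pos.2 (by exact_mod_cast Nat.pos_of_ne_zero (by omega))
  set s : ℝ := Real.sqrt n with hsdef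
  set V1 : ℝ := stdNormCDF (s * (b - η)) - stdNormCDF (s * (-a - η)) with hV1
  set V2 : ℝ := stdNormCDF (s * (a - η)) - stdNormCDF (s * (-b - η)) with hV2
  have hbdd : BddBelow (Set.range fun θ => cover n (softThresh η) a b θ) := by
    refine ⟨0, ?_⟩
    rintro _ ⟨θ, rfl⟩
    exact ENNReal.toReal_nonneg
  have hM1 : V1 ≤ stdNormCDF (s * (a + η)) - stdNormCDF (s * (-b - η)) := by
    rw [hV1, ← right_val s η a b]
    have : stdNormCDF (s * (-b - η)) ≤ stdNormCDF (s * (-b + η)) :=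
      stdNormCDF_mono (by nlinarith)
    linarith
  have hM2 : V2 ≤ stdNormCDF (s * (a + η)) - stdNormCDF (s * (-b - η)) := by
    have : stdNormCDF (s * (a - η)) ≤ stdNormCDF (s * (a + η)) :=
      stdNormCDF_mono (by nlinarith)
    linarith
  have hlow : ∀ θ : ℝ, min V1 V2 ≤ cover n (softThresh η) a b θ := by
    intro θ
    by_cases h1 : b < θ
    · rw [cover_right hn hη ha hb h1, right_val s η a b]
      exact min_le_left _ _
    · by_cases h2 : θ < -a
      · rw [cover_left hn hη ha hb h2]
        exact min_le_right _ _
      · rw [cover_mid hn hη ha hb (by linarith) (by linarith)]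
        exact le_trans (min_le_left _ _) hM1
  have hinf1 : (⨅ θ : ℝ, cover n (softThresh η) a b θ) ≤ V1 := by
    have := ciInf_le hbdd (b + 1)
    rwa [cover_right hn hη ha hb (by linarith), right_val s η a b] at this
  have hinf2 : (⨅ θ : ℝ, cover n (softThresh η) a b θ) ≤ V2 := by
    have := ciInf_le hbdd (-a - 1)
    rwa [cover_left hn hη ha hb (by linarith)] at this
  have hmin : (⨅ θ : ℝ, cover n (softThresh η) a b θ) = min V1 V2 :=
    le_antisymm (le_min hinf1 hinf2) (le_ciInf hlow)
  rw [hmin]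
  split_ifs with hab
  · exact min_eq_right (comp_le hs hη ha hab)
  · exact min_eq_left (comp_le hs hη hb (by linarith))
end

section
/- For every n ≥ 1, every tuning parameter η_n > 0, all nonnegative real numbers a_n, b_n, and every θ ∈ ℝ, the coverage probability p_{S,n}(θ) = P_{n,θ}(θ ∈ [θ̂_S − a_n, θ̂_S + b_n]) equals Φ(n^{1/2}(a_n − η_n)) − Φ(n^{1/2}(−b_n − η_n)) if θ < −a_n; equals Φ(n^{1/2}(a_n + η_n)) − Φ(n^{1/2}(−b_n − η_n)) if −a_n ≤ θ ≤ b_n; and equals Φ(n^{1/2}(a_n + η_n)) − Φ(n^{1/2}(−b_n + η_n)) if θ > b_n. -/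
open MeasureTheory ProbabilityTheory Filter
open scoped NNReal

instance : NullSingletonClass (gaussianReal 0 1) :=
  ⟨fun _ => (gaussianReal_absolutelyContinuous 0 one_ne_zero) (Real.volume_singleton)⟩

lemma stdIcc {A B : ℝ} (h : A ≤ B) :
    ((gaussianReal 0 1) (Set.Icc A B)).toReal = stdNormCDF B - stdNormCDF A := by
  have h1 : Set.Iio A ⊆ Set.Iic B := (Set.Iio_subset_Iic_self).trans (Set.Iic_subset_Iic.2 h)
  have h2 : (gaussianReal 0 1) (Set.Iio A) = (gaussianReal 0 1) (Set.Iic A) :=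
    measure_congr (Iio_ae_eq_Iic)
  rw [← Set.Iic_sdiff_Iio, measure_diff h1 measurableSet_Iio.nullMeasurableSet
    (measure_ne_top _ _), ENNReal.toReal_sub_of_le (measure_mono h1) (measure_ne_top _ _), h2]
  rfl

lemma gaussMap (n : ℕ) (hn : 1 ≤ n) (θ : ℝ) :
    gaussianReal θ ((n : ℝ≥0))⁻¹ =
      ((gaussianReal 0 1).map (((Real.sqrt n)⁻¹) * ·)).map (· + θ) := by
  have hn' : (0:ℝ) < n := by exact_mod_cast hn
  rw [gaussianReal_map_const_mul, gaussianReal_map_add_const]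
  congr 1
  · simp
  · ext
    push_cast
    rw [inv_pow, Real.sq_sqrt hn'.le, mul_one]

lemma gaussIcc (n : ℕ) (hn : 1 ≤ n) (θ l u : ℝ) (h : l ≤ u) :
    ((gaussianReal θ ((n : ℝ≥0))⁻¹) (Set.Icc l u)).toReal =
      stdNormCDF (Real.sqrt n * (u - θ)) - stdNormCDF (Real.sqrt n * (l - θ)) := by
  have hn' : (0:ℝ) < n := by exact_mod_cast hn
  have hs : (0:ℝ) < Real.sqrt n := Real.sqrt_pos.2 hn'
  rw [gaussMap n hn θ, Measure.map_apply (measurable_add_const θ) measurableSet_Icc,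
    Set.preimage_add_const_Icc,
    Measure.map_apply (measurable_const_mul _) measurableSet_Icc,
    Set.preimage_const_mul_Icc₀ _ _ (inv_pos.2 hs)]
  rw [div_inv_eq_mul, div_inv_eq_mul, mul_comm (l - θ), mul_comm (u - θ)]
  exact stdIcc (by nlinarith)

lemma soft_of_ge {η y : ℝ} (hη : 0 < η) (h : η ≤ y) : softThresh η y = y - η := by
  have hy : 0 < y := lt_of_lt_of_le hη h
  rw [softThresh, Real.sign_of_pos hy, abs_of_pos hy, one_mul, max_eq_left (by linarith)]

lemma soft_of_le {η y : ℝ} (hη : 0 < η) (h : y ≤ -η) : softThresh η y = y + η := by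
  have hy : y < 0 := lt_of_le_of_lt h (by linarith)
  rw [softThresh, Real.sign_of_neg hy, abs_of_neg hy, max_eq_left (by linarith)]
  ring

lemma soft_of_mid {η y : ℝ} (h1 : -η ≤ y) (h2 : y ≤ η) : softThresh η y = 0 := by
  rw [softThresh, max_eq_right (by cases abs_cases y <;> linarith), mul_zero]

/-- The finite-sample coverage probability of `[θ̂_S - a, θ̂_S + b]`, given piecewise
in `θ` (equation (cov_S)). -/
theorem stmt_1 (n : ℕ) (hn : 1 ≤ n) (η a b : ℝ) (hη : 0 < η) (ha : 0 ≤ a) (hb : 0 ≤ b)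
    (θ : ℝ) :
    (θ < -a →
      cover n (softThresh η) a b θ =
        stdNormCDF (Real.sqrt n * (a - η)) - stdNormCDF (Real.sqrt n * (-b - η))) ∧
    (-a ≤ θ → θ ≤ b →
      cover n (softThresh η) a b θ =
        stdNormCDF (Real.sqrt n * (a + η)) - stdNormCDF (Real.sqrt n * (-b - η))) ∧
    (b < θ →
      cover n (softThresh η) a b θ =
        stdNormCDF (Real.sqrt n * (a + η)) - stdNormCDF (Real.sqrt n * (-b + η))) := by
  refine ⟨fun h1 => ?_, fun h2a h2b => ?_, fun h3 => ?_⟩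
  · have hset : {y : ℝ | softThresh η y - a ≤ θ ∧ θ ≤ softThresh η y + b} =
        Set.Icc (θ - b - η) (θ + a - η) := by
      ext y
      simp only [Set.mem_setOf_eq, Set.mem_Icc]
      rcases le_or_gt y (-η) with hy | hy
      · rw [soft_of_le hη hy]
        constructor <;> rintro ⟨u1, u2⟩ <;> constructor <;> linarith
      · rcases le_or_gt y η with hy2 | hy2
        · rw [soft_of_mid hy.le hy2]
          constructor <;> rintro ⟨u1, u2⟩ <;> constructor <;> linarith
        · rw [soft_of_ge hη hy2.le]
          constructor <;> rintro ⟨u1, u2⟩ <;> constructor <;> linarith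
    rw [cover, hset, gaussIcc n hn θ _ _ (by linarith)]
    ring_nf
  · have hset : {y : ℝ | softThresh η y - a ≤ θ ∧ θ ≤ softThresh η y + b} =
        Set.Icc (θ - b - η) (θ + a + η) := by
      ext y
      simp only [Set.mem_setOf_eq, Set.mem_Icc]
      rcases le_or_gt y (-η) with hy | hy
      · rw [soft_of_le hη hy]
        constructor <;> rintro ⟨u1, u2⟩ <;> constructor <;> linarith
      · rcases le_or_gt y η with hy2 | hy2
        · rw [soft_of_mid hy.le hy2]
          constructor <;> rintro ⟨u1, u2⟩ <;> constructor <;> linarith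
        · rw [soft_of_ge hη hy2.le]
          constructor <;> rintro ⟨u1, u2⟩ <;> constructor <;> linarith
    rw [cover, hset, gaussIcc n hn θ _ _ (by linarith)]
    ring_nf
  · have hset : {y : ℝ | softThresh η y - a ≤ θ ∧ θ ≤ softThresh η y + b} =
        Set.Icc (θ - b + η) (θ + a + η) := by
      ext y
      simp only [Set.mem_setOf_eq, Set.mem_Icc]
      rcases le_or_gt y (-η) with hy | hy
      · rw [soft_of_le hη hy]
        constructor <;> rintro ⟨u1, u2⟩ <;> constructor <;> linarith
      · rcases le_or_gt y η with hy2 | hy2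
        · rw [soft_of_mid hy.le hy2]
          constructor <;> rintro ⟨u1, u2⟩ <;> constructor <;> linarith
        · rw [soft_of_ge hη hy2.le]
          constructor <;> rintro ⟨u1, u2⟩ <;> constructor <;> linarith
    rw [cover, hset, gaussIcc n hn θ _ _ (by linarith)]
    ring_nf
end

section
/- For every n ≥ 1, every tuning parameter η_n > 0, all nonnegative real numbers a_n, b_n, and every θ ∈ ℝ, the coverage probability p_{A,n}(θ) = P_{n,θ}(θ ∈ [θ̂_A − a_n, θ̂_A + b_n]) equals Φ(n^{1/2} γ^{(−)}(θ, −a_n)) − Φ(n^{1/2} γ^{(−)}(θ, b_n)) if θ < −a_n; equals Φ(n^{1/2} γ^{(+)}(θ, −a_n)) − Φ(n^{1/2} γ^{(−)}(θ, b_n)) if −a_n ≤ θ ≤ b_n; and equals Φ(n^{1/2} γ^{(+)}(θ, −a_n)) − Φ(n^{1/2} γ^{(+)}(θ, b_n)) if θ > b_n, where γ^{(−)}(θ, x) = −((θ + x)/2) − sqrt(((θ − x)/2)² + η_n²) and γ^{(+)}(θ, x) = −((θ + x)/2) + sqrt(((θ − x)/2)² + η_n²). -/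
open MeasureTheory ProbabilityTheory Filter
open scoped NNReal

/-- The function `γ⁻(θ, x) = -((θ+x)/2) - √(((θ-x)/2)² + η²)`. -/
noncomputable def gammaMinus (η θ x : ℝ) : ℝ :=
  -((θ + x) / 2) - Real.sqrt (((θ - x) / 2) ^ 2 + η ^ 2)

/-- The function `γ⁺(θ, x) = -((θ+x)/2) + √(((θ-x)/2)² + η²)`. -/
noncomputable def gammaPlus (η θ x : ℝ) : ℝ :=
  -((θ + x) / 2) + Real.sqrt (((θ - x) / 2) ^ 2 + η ^ 2)

section Aux

lemma gauss_map_aux (θ : ℝ) (n : ℕ) (hn : 1 ≤ n) :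
    (gaussianReal θ ((n : ℝ≥0))⁻¹).map (fun y => y * Real.sqrt n + (-(Real.sqrt n * θ)))
      = gaussianReal 0 1 := by
  have hmeas : Measurable fun y : ℝ => y * Real.sqrt n := by fun_prop
  have : (gaussianReal θ ((n : ℝ≥0))⁻¹).map (fun y => y * Real.sqrt n + (-(Real.sqrt n * θ)))
      = ((gaussianReal θ ((n : ℝ≥0))⁻¹).map (· * Real.sqrt n)).map (· + (-(Real.sqrt n * θ))) := by
    rw [Measure.map_map (by fun_prop) hmeas]; rfl
  rw [this, gaussianReal_map_mul_const, gaussianReal_map_add_const]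
  have hn0 : (n : ℝ≥0) ≠ 0 := by positivity
  congr 1
  · ring
  · ext
    push_cast
    rw [Real.sq_sqrt (by positivity)]
    field_simp

lemma gauss_Iic_aux (θ : ℝ) (n : ℕ) (hn : 1 ≤ n) (t : ℝ) :
    ((gaussianReal θ ((n : ℝ≥0))⁻¹) (Set.Iic t)).toReal
      = stdNormCDF (Real.sqrt n * (t - θ)) := by
  have hs : (0:ℝ) < Real.sqrt n := Real.sqrt_pos.2 (by exact_mod_cast Nat.pos_of_ne_zero (by omega))
  have hpre : (fun y : ℝ => y * Real.sqrt n + (-(Real.sqrt n * θ))) ⁻¹'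
      (Set.Iic (Real.sqrt n * (t - θ))) = Set.Iic t := by
    ext y
    simp only [Set.mem_preimage, Set.mem_Iic]
    constructor
    · intro h; nlinarith
    · intro h; nlinarith
  rw [stdNormCDF, ← gauss_map_aux θ n hn, Measure.map_apply (by fun_prop) measurableSet_Iic, hpre]

lemma gauss_Icc_aux (θ : ℝ) (n : ℕ) (hn : 1 ≤ n) (L U : ℝ) (hLU : L ≤ U) :
    ((gaussianReal θ ((n : ℝ≥0))⁻¹) (Set.Icc L U)).toReal
      = stdNormCDF (Real.sqrt n * (U - θ)) - stdNormCDF (Real.sqrt n * (L - θ)) := by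
  set μ := gaussianReal θ ((n : ℝ≥0))⁻¹
  have hn0 : ((n : ℝ≥0))⁻¹ ≠ 0 := by
    have : (n : ℝ≥0) ≠ 0 := by positivity
    simpa using this
  have hac : μ ≪ volume := gaussianReal_absolutelyContinuous θ hn0
  have hIio : μ (Set.Iio L) = μ (Set.Iic L) := by
    have h1 : Set.Iic L = Set.Iio L ∪ {L} := by
      ext x; simp [le_iff_lt_or_eq]
    have h2 : μ {L} = 0 := hac (measure_singleton L)
    rw [h1]
    refine le_antisymm (measure_mono Set.subset_union_left) ?_
    calc μ (Set.Iio L ∪ {L}) ≤ μ (Set.Iio L) + μ {L} := measure_union_le _ _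
    _ = μ (Set.Iio L) := by rw [h2, add_zero]
  have hsub : Set.Iio L ⊆ Set.Iic U := fun x hx => le_trans (le_of_lt hx) hLU
  have hIcc : μ (Set.Icc L U) = μ (Set.Iic U) - μ (Set.Iio L) := by
    rw [← Set.Iic_sdiff_Iio,
      measure_diff hsub (measurableSet_Iio.nullMeasurableSet) (measure_ne_top μ _)]
  rw [hIcc, hIio, ENNReal.toReal_sub_of_le (by rw [← hIio]; exact measure_mono hsub)
    (measure_ne_top μ _), gauss_Iic_aux θ n hn, gauss_Iic_aux θ n hn]

lemma sqrt_facts_aux (η c : ℝ) (hη : 0 < η) :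
    0 ≤ Real.sqrt ((c/2)^2 + η^2) ∧ (Real.sqrt ((c/2)^2 + η^2))^2 = (c/2)^2 + η^2 ∧
    c/2 < Real.sqrt ((c/2)^2 + η^2) ∧ -(c/2) < Real.sqrt ((c/2)^2 + η^2) ∧
    η ≤ Real.sqrt ((c/2)^2 + η^2) := by
  set s := Real.sqrt ((c/2)^2 + η^2) with hs
  have hs0 : 0 ≤ s := Real.sqrt_nonneg _
  have hs2 : s^2 = (c/2)^2 + η^2 := Real.sq_sqrt (by positivity)
  have h1 : c/2 < s := by nlinarith [sq_nonneg (s - c/2)]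
  have h2 : -(c/2) < s := by nlinarith [sq_nonneg (s + c/2)]
  have h3 : η ≤ s := by nlinarith [sq_nonneg (s - η), sq_nonneg (c/2)]
  exact ⟨hs0, hs2, h1, h2, h3⟩

lemma ada_le_iff (η c : ℝ) (hη : 0 < η) (hc : 0 ≤ c) (y : ℝ) :
    adaLasso η y ≤ c ↔ y ≤ c/2 + Real.sqrt ((c/2)^2 + η^2) := by
  obtain ⟨hs0, hs2, h1, h2, h3⟩ := sqrt_facts_aux η c hη
  set s := Real.sqrt ((c/2)^2 + η^2)
  unfold adaLasso
  split_ifs with h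
  · have := abs_le.mp h
    constructor <;> intro _ <;> [nlinarith; exact hc]
  · push_neg at h
    rcases lt_or_ge y 0 with hy | hy
    · have hy' : y < -η := by rcases abs_cases y with ⟨h', _⟩ | ⟨h', _⟩ <;> linarith
      have hyne : y ≠ 0 := ne_of_lt hy
      have hf : y - η^2/y = (y^2 - η^2)/y := by
        rw [sub_div, pow_two y, mul_div_assoc, div_self hyne, mul_one]
      have hfneg : (y^2 - η^2)/y ≤ 0 :=
        div_nonpos_of_nonneg_of_nonpos (by nlinarith) (le_of_lt hy)
      constructor <;> intro _
      · nlinarith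
      · rw [hf]; linarith
    · have hy' : η < y := by rcases abs_cases y with ⟨h', _⟩ | ⟨h', _⟩ <;> linarith
      have hy0 : (0:ℝ) < y := lt_trans hη hy'
      have hyne : y ≠ 0 := ne_of_gt hy0
      have hf : y - η^2/y = (y^2 - η^2)/y := by
        rw [sub_div, pow_two y, mul_div_assoc, div_self hyne, mul_one]
      rw [hf, div_le_iff₀ hy0]
      constructor
      · intro hle
        by_contra hcon
        push_neg at hcon
        nlinarith [mul_pos (show (0:ℝ) < y - (c/2 + s) by linarith)
          (show (0:ℝ) < y - (c/2 - s) by linarith)]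
      · intro hle
        nlinarith [mul_nonneg (show (0:ℝ) ≤ c/2 + s - y by linarith)
          (show (0:ℝ) ≤ y - (c/2 - s) by linarith)]

lemma ada_le_iff_neg (η c : ℝ) (hη : 0 < η) (hc : c < 0) (y : ℝ) :
    adaLasso η y ≤ c ↔ y ≤ c/2 - Real.sqrt ((c/2)^2 + η^2) := by
  obtain ⟨hs0, hs2, h1, h2, h3⟩ := sqrt_facts_aux η c hη
  set s := Real.sqrt ((c/2)^2 + η^2)
  unfold adaLasso
  split_ifs with h
  · have := abs_le.mp h
    exact iff_of_false (by linarith) (by push_neg; nlinarith)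
  · push_neg at h
    rcases lt_or_ge y 0 with hy | hy
    · have hy' : y < -η := by rcases abs_cases y with ⟨h', _⟩ | ⟨h', _⟩ <;> linarith
      have hyne : y ≠ 0 := ne_of_lt hy
      have hf : y - η^2/y = (y^2 - η^2)/y := by
        rw [sub_div, pow_two y, mul_div_assoc, div_self hyne, mul_one]
      rw [hf, div_le_iff_of_neg hy]
      constructor
      · intro hle
        by_contra hcon
        push_neg at hcon
        nlinarith [mul_neg_of_neg_of_pos (show y - (c/2 + s) < 0 by nlinarith)
          (show (0:ℝ) < y - (c/2 - s) by linarith)]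
      · intro hle
        nlinarith [mul_nonneg (show (0:ℝ) ≤ (c/2 - s) - y by linarith)
          (show (0:ℝ) ≤ (c/2 + s) - y by linarith)]
    · have hy' : η < y := by rcases abs_cases y with ⟨h', _⟩ | ⟨h', _⟩ <;> linarith
      have hy0 : (0:ℝ) < y := lt_trans hη hy'
      have hyne : y ≠ 0 := ne_of_gt hy0
      have hf : y - η^2/y = (y^2 - η^2)/y := by
        rw [sub_div, pow_two y, mul_div_assoc, div_self hyne, mul_one]
      refine iff_of_false ?_ (by push_neg; nlinarith)
      rw [hf]
      push_neg
      exact lt_of_lt_of_le hc (div_nonneg (by nlinarith) (le_of_lt hy0))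

lemma ada_neg (η y : ℝ) : adaLasso η (-y) = -adaLasso η y := by
  unfold adaLasso
  rw [abs_neg]
  split_ifs with h
  · ring
  · rw [div_neg]
    ring

lemma ada_ge_iff (η c : ℝ) (hη : 0 < η) (hc : c ≤ 0) (y : ℝ) :
    c ≤ adaLasso η y ↔ c/2 - Real.sqrt ((c/2)^2 + η^2) ≤ y := by
  have h := ada_le_iff η (-c) hη (by linarith) (-y)
  rw [ada_neg, neg_le_neg_iff] at h
  rw [h, show (-c/2)^2 + η^2 = (c/2)^2 + η^2 from by ring]
  constructor <;> intro <;> linarith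

lemma ada_ge_iff_pos (η c : ℝ) (hη : 0 < η) (hc : 0 < c) (y : ℝ) :
    c ≤ adaLasso η y ↔ c/2 + Real.sqrt ((c/2)^2 + η^2) ≤ y := by
  have h := ada_le_iff_neg η (-c) hη (by linarith) (-y)
  rw [ada_neg, neg_le_neg_iff] at h
  rw [h, show (-c/2)^2 + η^2 = (c/2)^2 + η^2 from by ring]
  constructor <;> intro <;> linarith

lemma mono_minus_aux (η c₁ c₂ : ℝ) (hη : 0 < η) (h : c₁ ≤ c₂) :
    c₁/2 - Real.sqrt ((c₁/2)^2 + η^2) ≤ c₂/2 - Real.sqrt ((c₂/2)^2 + η^2) := by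
  obtain ⟨h10, h12, h11, h1n, h1e⟩ := sqrt_facts_aux η c₁ hη
  obtain ⟨h20, h22, h21, h2n, h2e⟩ := sqrt_facts_aux η c₂ hη
  set s₁ := Real.sqrt ((c₁/2)^2 + η^2)
  set s₂ := Real.sqrt ((c₂/2)^2 + η^2)
  have hsum : 0 < s₁ + s₂ := by linarith
  nlinarith [mul_nonneg (show (0:ℝ) ≤ c₂ - c₁ by linarith)
    (show (0:ℝ) ≤ 2*(s₁ + s₂) - (c₁ + c₂) by linarith)]

lemma mono_plus_aux (η c₁ c₂ : ℝ) (hη : 0 < η) (h : c₁ ≤ c₂) :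
    c₁/2 + Real.sqrt ((c₁/2)^2 + η^2) ≤ c₂/2 + Real.sqrt ((c₂/2)^2 + η^2) := by
  obtain ⟨h10, h12, h11, h1n, h1e⟩ := sqrt_facts_aux η c₁ hη
  obtain ⟨h20, h22, h21, h2n, h2e⟩ := sqrt_facts_aux η c₂ hη
  set s₁ := Real.sqrt ((c₁/2)^2 + η^2)
  set s₂ := Real.sqrt ((c₂/2)^2 + η^2)
  have hsum : 0 < s₁ + s₂ := by linarith
  nlinarith [mul_nonneg (show (0:ℝ) ≤ c₂ - c₁ by linarith)
    (show (0:ℝ) ≤ 2*(s₁ + s₂) + (c₁ + c₂) by linarith)]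

end Aux

/-- The finite-sample coverage probability of `[θ̂_A - a, θ̂_A + b]`, given piecewise
in `θ` (equation (cov)). -/
theorem stmt_4 (n : ℕ) (hn : 1 ≤ n) (η a b : ℝ) (hη : 0 < η) (ha : 0 ≤ a) (hb : 0 ≤ b)
    (θ : ℝ) :
    (θ < -a →
      cover n (adaLasso η) a b θ =
        stdNormCDF (Real.sqrt n * gammaMinus η θ (-a)) -
          stdNormCDF (Real.sqrt n * gammaMinus η θ b)) ∧
    (-a ≤ θ → θ ≤ b →
      cover n (adaLasso η) a b θ =
        stdNormCDF (Real.sqrt n * gammaPlus η θ (-a)) -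
          stdNormCDF (Real.sqrt n * gammaMinus η θ b)) ∧
    (b < θ →
      cover n (adaLasso η) a b θ =
        stdNormCDF (Real.sqrt n * gammaPlus η θ (-a)) -
          stdNormCDF (Real.sqrt n * gammaPlus η θ b)) := by
  refine ⟨?_, ?_, ?_⟩
  · intro hθ
    set L : ℝ := (θ-b)/2 - Real.sqrt (((θ-b)/2)^2 + η^2) with hL
    set U : ℝ := (θ+a)/2 - Real.sqrt (((θ+a)/2)^2 + η^2) with hU
    have hLU : L ≤ U := mono_minus_aux η (θ-b) (θ+a) hη (by linarith)
    have hset : {y : ℝ | adaLasso η y - a ≤ θ ∧ θ ≤ adaLasso η y + b} = Set.Icc L U := by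
      ext y
      simp only [Set.mem_setOf_eq, Set.mem_Icc]
      constructor
      · rintro ⟨hA, hB⟩
        exact ⟨(ada_ge_iff η (θ-b) hη (by linarith) y).mp (by linarith), (ada_le_iff_neg η (θ+a) hη (by linarith) y).mp (by linarith)⟩
      · rintro ⟨hA, hB⟩
        have h1 := (ada_le_iff_neg η (θ+a) hη (by linarith) y).mpr hB
        have h2 := (ada_ge_iff η (θ-b) hη (by linarith) y).mpr hA
        constructor <;> linarith
    rw [cover, hset, gauss_Icc_aux θ n hn L U hLU]
    congr 2
    · rw [hU]; unfold gammaMinus; rw [show ((θ - -a)/2)^2 + η^2 = ((θ+a)/2)^2 + η^2 from by ring]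
      ring
    · rw [hL]; unfold gammaMinus; ring
  · intro hθ1 hθ2
    set L : ℝ := (θ-b)/2 - Real.sqrt (((θ-b)/2)^2 + η^2) with hL
    set U : ℝ := (θ+a)/2 + Real.sqrt (((θ+a)/2)^2 + η^2) with hU
    obtain ⟨h10, h12, h11, h1n, h1e⟩ := sqrt_facts_aux η (θ-b) hη
    obtain ⟨h20, h22, h21, h2n, h2e⟩ := sqrt_facts_aux η (θ+a) hη
    have hLU : L ≤ U := by rw [hL, hU]; nlinarith
    have hset : {y : ℝ | adaLasso η y - a ≤ θ ∧ θ ≤ adaLasso η y + b} = Set.Icc L U := by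
      ext y
      simp only [Set.mem_setOf_eq, Set.mem_Icc]
      constructor
      · rintro ⟨hA, hB⟩
        exact ⟨(ada_ge_iff η (θ-b) hη (by linarith) y).mp (by linarith), (ada_le_iff η (θ+a) hη (by linarith) y).mp (by linarith)⟩
      · rintro ⟨hA, hB⟩
        have h1 := (ada_le_iff η (θ+a) hη (by linarith) y).mpr hB
        have h2 := (ada_ge_iff η (θ-b) hη (by linarith) y).mpr hA
        constructor <;> linarith
    rw [cover, hset, gauss_Icc_aux θ n hn L U hLU]
    congr 2
    · rw [hU]; unfold gammaPlus; rw [show ((θ - -a)/2)^2 + η^2 = ((θ+a)/2)^2 + η^2 from by ring]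
      ring
    · rw [hL]; unfold gammaMinus; ring
  · intro hθ
    set L : ℝ := (θ-b)/2 + Real.sqrt (((θ-b)/2)^2 + η^2) with hL
    set U : ℝ := (θ+a)/2 + Real.sqrt (((θ+a)/2)^2 + η^2) with hU
    have hLU : L ≤ U := mono_plus_aux η (θ-b) (θ+a) hη (by linarith)
    have hset : {y : ℝ | adaLasso η y - a ≤ θ ∧ θ ≤ adaLasso η y + b} = Set.Icc L U := by
      ext y
      simp only [Set.mem_setOf_eq, Set.mem_Icc]
      constructor
      · rintro ⟨hA, hB⟩
        exact ⟨(ada_ge_iff_pos η (θ-b) hη (by linarith) y).mp (by linarith), (ada_le_iff η (θ+a) hη (by linarith) y).mp (by linarith)⟩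
      · rintro ⟨hA, hB⟩
        have h1 := (ada_le_iff η (θ+a) hη (by linarith) y).mpr hB
        have h2 := (ada_ge_iff_pos η (θ-b) hη (by linarith) y).mpr hA
        constructor <;> linarith
    rw [cover, hset, gauss_Icc_aux θ n hn L U hLU]
    congr 2
    · rw [hU]; unfold gammaPlus; rw [show ((θ - -a)/2)^2 + η^2 = ((θ+a)/2)^2 + η^2 from by ring]
      ring
    · rw [hL]; unfold gammaPlus; ring
end

section
/- For every n ≥ 1, every tuning parameter η_n > 0 and every δ with 0 < δ < 1: the equation Φ(n^{1/2}(a − η_n)) − Φ(−n^{1/2} a) = δ has a unique solution a_{n,H}* in [0, ∞), this solution satisfies a_{n,H}* > η_n/2, the interval [θ̂_H − a_{n,H}*, θ̂_H + a_{n,H}*] has infimal coverage probability inf_{θ∈ℝ} P_{n,θ}(θ ∈ [θ̂_H − a_{n,H}*, θ̂_H + a_{n,H}*]) exactly equal to δ, and among all pairs (a, b) of nonnegative reals for which inf_{θ∈ℝ} P_{n,θ}(θ ∈ [θ̂_H − a, θ̂_H + b]) ≥ δ the length a + b is uniquely minimized at a = b = a_{n,H}*. -/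
open MeasureTheory ProbabilityTheory Filter
open scoped NNReal

namespace Stmt7

open Set Topology


noncomputable def pdf : ℝ → ℝ := gaussianPDFReal 0 1

lemma pdf_def (x : ℝ) :
    pdf x = (Real.sqrt (2 * Real.pi))⁻¹ * Real.exp (-x ^ 2 / 2) := by
  simp [pdf, gaussianPDFReal]

lemma pdf_pos (x : ℝ) : 0 < pdf x := gaussianPDFReal_pos _ _ _ one_ne_zero

lemma pdf_integrable : Integrable pdf := integrable_gaussianPDFReal 0 1

lemma pdf_le_pdf {x y : ℝ} (h : x ^ 2 ≤ y ^ 2) : pdf y ≤ pdf x := by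
  rw [pdf_def, pdf_def]
  have h2 : (0:ℝ) ≤ (Real.sqrt (2 * Real.pi))⁻¹ := by positivity
  have := Real.exp_le_exp.mpr (by linarith : -y ^ 2 / 2 ≤ -x ^ 2 / 2)
  exact mul_le_mul_of_nonneg_left this h2

lemma pdf_lt_pdf {x y : ℝ} (h : x ^ 2 < y ^ 2) : pdf y < pdf x := by
  rw [pdf_def, pdf_def]
  have h2 : (0:ℝ) < (Real.sqrt (2 * Real.pi))⁻¹ := by positivity
  have := Real.exp_lt_exp.mpr (by linarith : -y ^ 2 / 2 < -x ^ 2 / 2)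
  exact mul_lt_mul_of_pos_left this h2

lemma cdf_eq_integral (x : ℝ) : stdNormCDF x = ∫ t in Iic x, pdf t := by
  rw [stdNormCDF, gaussianReal_apply_eq_integral 0 one_ne_zero,
    ENNReal.toReal_ofReal (integral_nonneg fun t => (gaussianPDFReal_pos 0 1 t one_ne_zero).le)]
  rfl

lemma cdf_sub (x y : ℝ) :
    stdNormCDF y - stdNormCDF x = ∫ t in x..y, pdf t := by
  rw [cdf_eq_integral, cdf_eq_integral,
    intervalIntegral.integral_Iic_sub_Iic pdf_integrable.integrableOn pdf_integrable.integrableOn]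

lemma cdf_strictMono : StrictMono stdNormCDF := by
  intro x y h
  have h1 := cdf_sub x y
  have h2 := intervalIntegral.intervalIntegral_pos_of_pos (pdf_integrable.intervalIntegrable) pdf_pos h
  linarith

lemma cdf_mono : Monotone stdNormCDF := cdf_strictMono.monotone

lemma cdf_continuous : Continuous stdNormCDF := by
  have h : stdNormCDF = fun x => stdNormCDF 0 + ∫ t in (0:ℝ)..x, pdf t := by
    funext x
    have := cdf_sub 0 x
    linarith
  rw [h]
  exact continuous_const.add (pdf_integrable.continuous_primitive 0)

lemma cdf_nonneg (x : ℝ) : 0 ≤ stdNormCDF x := ENNReal.toReal_nonneg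

lemma cdf_le_one (x : ℝ) : stdNormCDF x ≤ 1 := by
  have h : (gaussianReal 0 1) (Set.Iic x) ≤ 1 := prob_le_one
  simpa [stdNormCDF] using ENNReal.toReal_mono ENNReal.one_ne_top h

lemma cdf_tendsto_atTop : Tendsto stdNormCDF atTop (𝓝 1) := by
  have h := tendsto_measure_Iic_atTop (gaussianReal 0 1)
  rw [measure_univ] at h
  have h2 := (ENNReal.tendsto_toReal ENNReal.one_ne_top).comp h
  exact h2

lemma cdf_tendsto_atBot : Tendsto stdNormCDF atBot (𝓝 0) := by
  have hI : ⋂ x : ℝ, Iic x = (∅ : Set ℝ) := by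
    ext y
    simp only [mem_iInter, mem_Iic, mem_empty_iff_false, iff_false, not_forall, not_le]
    exact ⟨y - 1, by linarith⟩
  have h := tendsto_measure_iInter_atBot
    (μ := gaussianReal 0 1) (s := fun x : ℝ => Iic x)
    (fun x => measurableSet_Iic.nullMeasurableSet) monotone_Iic ⟨0, measure_ne_top _ _⟩
  rw [hI, measure_empty] at h
  have h2 := (ENNReal.tendsto_toReal ENNReal.zero_ne_top).comp h
  exact h2

/-- Key spread comparison: moving mass window towards the center increases probability. -/
lemma spread {p r T : ℝ} (hT : 0 ≤ T) (hrp : r ≤ p) (hsum : p + r + 2 * T ≤ 0) :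
    stdNormCDF (r + T) - stdNormCDF r ≤ stdNormCDF (p + T) - stdNormCDF p := by
  rw [cdf_sub, cdf_sub]
  have e1 : (∫ t in r..r + T, pdf t) = ∫ τ in (0:ℝ)..T, pdf (r + τ) := by
    rw [intervalIntegral.integral_comp_add_left pdf r, add_zero]
  have e2 : (∫ t in p..p + T, pdf t) = ∫ τ in (0:ℝ)..T, pdf (p + τ) := by
    rw [intervalIntegral.integral_comp_add_left pdf p, add_zero]
  rw [e1, e2]
  refine intervalIntegral.integral_mono_on hT ?_ ?_ ?_
  · exact (pdf_integrable.comp_add_left r).intervalIntegrable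
  · exact (pdf_integrable.comp_add_left p).intervalIntegrable
  · intro τ hτ
    rcases hτ with ⟨h0, hT'⟩
    apply pdf_le_pdf
    nlinarith
lemma spread_strict {p r T : ℝ} (hT : 0 < T) (hrp : r < p) (hsum : p + r + 2 * T ≤ 0) :
    stdNormCDF (r + T) - stdNormCDF r < stdNormCDF (p + T) - stdNormCDF p := by
  rw [cdf_sub, cdf_sub]
  have e1 : (∫ t in r..r + T, pdf t) = ∫ τ in (0:ℝ)..T, pdf (r + τ) := by
    rw [intervalIntegral.integral_comp_add_left pdf r, add_zero]
  have e2 : (∫ t in p..p + T, pdf t) = ∫ τ in (0:ℝ)..T, pdf (p + τ) := by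
    rw [intervalIntegral.integral_comp_add_left pdf p, add_zero]
  rw [e1, e2]
  have hint1 : IntervalIntegrable (fun τ => pdf (r + τ)) volume 0 T :=
    (pdf_integrable.comp_add_left r).intervalIntegrable
  have hint2 : IntervalIntegrable (fun τ => pdf (p + τ)) volume 0 T :=
    (pdf_integrable.comp_add_left p).intervalIntegrable
  have key : 0 < ∫ τ in (0:ℝ)..T, (pdf (p + τ) - pdf (r + τ)) := by
    refine intervalIntegral.intervalIntegral_pos_of_pos_on (hint2.sub hint1) ?_ hT
    intro τ hτ
    rcases hτ with ⟨h0, hT'⟩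
    have hsq : (p + τ) ^ 2 < (r + τ) ^ 2 := by nlinarith
    have := pdf_lt_pdf hsq
    linarith
  rw [intervalIntegral.integral_sub hint2 hint1] at key
  linarith

noncomputable def ν (n : ℕ) (θ : ℝ) : Measure ℝ := gaussianReal θ ((n : ℝ≥0))⁻¹

lemma vne {n : ℕ} (hn : 1 ≤ n) : ((n : ℝ≥0))⁻¹ ≠ 0 := by
  have : (n : ℝ≥0) ≠ 0 := Nat.cast_ne_zero.mpr (by omega)
  exact inv_ne_zero this

lemma sqrtn_pos {n : ℕ} (hn : 1 ≤ n) : 0 < Real.sqrt n :=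
  Real.sqrt_pos.mpr (by exact_mod_cast Nat.pos_of_ne_zero (by omega))

instance (n : ℕ) (θ : ℝ) : IsProbabilityMeasure (ν n θ) := by
  rw [ν]; infer_instance

lemma ν_map {n : ℕ} (hn : 1 ≤ n) (θ : ℝ) :
    Measure.map (fun y => Real.sqrt n * (y - θ)) (ν n θ) = gaussianReal 0 1 := by
  have h1 : Measure.map (· + (-θ)) (ν n θ) = gaussianReal 0 ((n : ℝ≥0))⁻¹ := by
    rw [ν, gaussianReal_map_add_const]
    simp
  have h2 : Measure.map (fun y => Real.sqrt n * y) (gaussianReal 0 ((n : ℝ≥0))⁻¹)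
      = gaussianReal 0 1 := by
    rw [show (fun y => Real.sqrt n * y) = ((Real.sqrt n : ℝ) * ·) from rfl,
      gaussianReal_map_const_mul]
    norm_num
    congr 1
    ext
    push_cast
    rw [mul_inv_cancel₀ (by exact_mod_cast (by omega : n ≠ 0))]
  rw [← h2, ← h1, Measure.map_map (measurable_const_mul _) (measurable_add_const _)]
  congr 1

lemma ν_Iic {n : ℕ} (hn : 1 ≤ n) (θ x : ℝ) :
    ν n θ (Iic x) = gaussianReal 0 1 (Iic (Real.sqrt n * (x - θ))) := by
  rw [← ν_map hn θ,
    Measure.map_apply (by fun_prop) measurableSet_Iic]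
  congr 1
  ext y
  simp only [mem_preimage, mem_Iic]
  constructor
  · intro h
    exact mul_le_mul_of_nonneg_left (by linarith) (sqrtn_pos hn).le
  · intro h
    have := (mul_le_mul_iff_right₀ (sqrtn_pos hn)).mp h
    linarith
lemma ν_Iic_toReal {n : ℕ} (hn : 1 ≤ n) (θ x : ℝ) :
    (ν n θ (Iic x)).toReal = stdNormCDF (Real.sqrt n * (x - θ)) := by
  rw [ν_Iic hn, stdNormCDF]

lemma ν_singleton {n : ℕ} (hn : 1 ≤ n) (θ x : ℝ) : ν n θ {x} = 0 :=
  gaussianReal_absolutelyContinuous θ (vne hn) Real.volume_singleton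

lemma ν_Icc {n : ℕ} (hn : 1 ≤ n) (θ : ℝ) {x y : ℝ} (hxy : x ≤ y) :
    (ν n θ (Icc x y)).toReal
      = stdNormCDF (Real.sqrt n * (y - θ)) - stdNormCDF (Real.sqrt n * (x - θ)) := by
  have hIio : ν n θ (Iio x) = ν n θ (Iic x) :=
    measure_congr (Iio_ae_eq_Iic' (ν_singleton hn θ x))
  have hsub : ν n θ (Icc x y) = ν n θ (Iic y) - ν n θ (Iio x) := by
    rw [← Iic_sdiff_Iio]
    exact measure_diff (fun z hz => le_trans (le_of_lt hz) hxy)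
      measurableSet_Iio.nullMeasurableSet (measure_ne_top _ _)
  have hle : ν n θ (Iio x) ≤ ν n θ (Iic y) :=
    measure_mono (fun z hz => le_trans (le_of_lt hz) hxy)
  rw [hsub, ENNReal.toReal_sub_of_le hle (measure_ne_top _ _), hIio,
    ν_Iic_toReal hn, ν_Iic_toReal hn]

lemma ν_Ico {n : ℕ} (hn : 1 ≤ n) (θ : ℝ) {x y : ℝ} (hxy : x ≤ y) :
    (ν n θ (Ico x y)).toReal
      = stdNormCDF (Real.sqrt n * (y - θ)) - stdNormCDF (Real.sqrt n * (x - θ)) := by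
  have h : ν n θ (Ico x y) = ν n θ (Icc x y) := by
    rw [← Icc_sdiff_right]
    exact measure_diff_null (ν_singleton hn θ y)
  rw [h, ν_Icc hn θ hxy]

lemma cover_eq (n : ℕ) (est : ℝ → ℝ) (a b θ : ℝ) :
    cover n est a b θ = (ν n θ (est ⁻¹' Icc (θ - b) (θ + a))).toReal := by
  rw [cover, ν]
  congr 2
  ext y
  simp only [mem_setOf_eq, mem_preimage, mem_Icc]
  constructor <;> intro h <;> exact ⟨by linarith [h.1, h.2], by linarith [h.1, h.2]⟩

lemma ht_meas (η : ℝ) : Measurable (hardThresh η) := by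
  unfold hardThresh
  exact Measurable.ite (measurableSet_lt measurable_const measurable_abs)
    measurable_id measurable_const

lemma cover_nonneg (n : ℕ) (est : ℝ → ℝ) (a b θ : ℝ) : 0 ≤ cover n est a b θ :=
  ENNReal.toReal_nonneg

lemma cover_bddBelow (n : ℕ) (est : ℝ → ℝ) (a b : ℝ) :
    BddBelow (Set.range (cover n est a b)) :=
  ⟨0, fun _ ⟨θ, hθ⟩ => hθ ▸ cover_nonneg n est a b θ⟩

lemma cover_upper {n : ℕ} (hn : 1 ≤ n) {η a b θ : ℝ} (hη : 0 < η) (hθ : θ < -a) :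
    cover n (hardThresh η) a b θ
      ≤ max 0 (stdNormCDF (Real.sqrt n * (-η - θ)) - stdNormCDF (Real.sqrt n * (-b))) := by
  rw [cover_eq]
  have hsub : hardThresh η ⁻¹' Icc (θ - b) (θ + a) ⊆ Ico (θ - b) (-η) := by
    intro y hy
    simp only [mem_preimage, mem_Icc] at hy
    by_cases hcase : η < |y|
    · rw [hardThresh, if_pos hcase] at hy
      have hyneg : y < 0 := by linarith [hy.2]
      have hy' : η < -y := by rwa [abs_of_neg hyneg] at hcase
      exact ⟨hy.1, by linarith⟩
    · rw [hardThresh, if_neg hcase] at hy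
      exact absurd hy.2 (by linarith)
  refine le_trans (ENNReal.toReal_mono (measure_ne_top _ _) (measure_mono hsub)) ?_
  rcases le_or_gt (θ - b) (-η) with hle | hlt
  · rw [ν_Ico hn θ hle, show θ - b - θ = -b from by ring]
    exact le_max_right _ _
  · rw [Ico_eq_empty (by linarith : ¬ (θ - b) < -η)]
    simp

lemma cover_lower_mid {n : ℕ} (hn : 1 ≤ n) {η a θ : ℝ} (h1 : -a ≤ θ) (h2 : θ ≤ a) :
    stdNormCDF (Real.sqrt n * a) - stdNormCDF (Real.sqrt n * (-a))
      ≤ cover n (hardThresh η) a a θ := by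
  rw [cover_eq]
  have hsub : Icc (θ - a) (θ + a) ⊆ hardThresh η ⁻¹' Icc (θ - a) (θ + a) := by
    intro y hy
    simp only [mem_Icc] at hy
    simp only [mem_preimage, mem_Icc]
    by_cases hcase : η < |y|
    · rw [hardThresh, if_pos hcase]; exact hy
    · rw [hardThresh, if_neg hcase]
      exact ⟨by linarith, by linarith⟩
  refine le_trans ?_ (ENNReal.toReal_mono (measure_ne_top _ _) (measure_mono hsub))
  rw [ν_Icc hn θ (by linarith : θ - a ≤ θ + a),
    show θ + a - θ = a from by ring, show θ - a - θ = -a from by ring]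

lemma cover_lower_left {n : ℕ} (hn : 1 ≤ n) {η a θ : ℝ} (hη : 0 < η) (hha : η ≤ 2 * a)
    (hθ : θ < -a) :
    stdNormCDF (Real.sqrt n * (a - η)) - stdNormCDF (Real.sqrt n * (-a))
      ≤ cover n (hardThresh η) a a θ := by
  rw [cover_eq]
  have hsub : Ico (θ - a) (min (θ + a) (-η)) ⊆ hardThresh η ⁻¹' Icc (θ - a) (θ + a) := by
    rintro y ⟨hy1, hy2⟩
    have hyη : y < -η := lt_of_lt_of_le hy2 (min_le_right _ _)
    have habs : η < |y| := by rw [abs_of_neg (by linarith : y < 0)]; linarith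
    simp only [mem_preimage, mem_Icc]
    rw [hardThresh, if_pos habs]
    exact ⟨hy1, le_of_lt (lt_of_lt_of_le hy2 (min_le_left _ _))⟩
  have hxu : θ - a ≤ min (θ + a) (-η) := le_min (by linarith) (by linarith)
  refine le_trans ?_ (ENNReal.toReal_mono (measure_ne_top _ _) (measure_mono hsub))
  rw [ν_Ico hn θ hxu, show θ - a - θ = -a from by ring]
  have hmin : a - η ≤ min (θ + a) (-η) - θ := by
    rcases min_cases (θ + a) (-η) with ⟨h, _⟩ | ⟨h, _⟩ <;> rw [h] <;> linarith
  have := cdf_mono (mul_le_mul_of_nonneg_left hmin (Real.sqrt_nonneg (n : ℝ)))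
  linarith

lemma hardThresh_neg (η y : ℝ) : hardThresh η (-y) = -hardThresh η y := by
  simp only [hardThresh, abs_neg]
  split <;> simp

lemma map_neg_ν {n : ℕ} (hn : 1 ≤ n) (θ : ℝ) :
    Measure.map (fun y : ℝ => -y) (ν n θ) = ν n (-θ) := by
  rw [ν, ν, show (fun y : ℝ => -y) = ((-1 : ℝ) * ·) from funext fun y => (neg_one_mul y).symm,
    gaussianReal_map_const_mul]
  norm_num

lemma cover_swap {n : ℕ} (hn : 1 ≤ n) (η a b θ : ℝ) :
    cover n (hardThresh η) a b θ = cover n (hardThresh η) b a (-θ) := by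
  have hs : (fun y : ℝ => -y) ⁻¹' (hardThresh η ⁻¹' Icc (-θ - a) (-θ + b))
      = hardThresh η ⁻¹' Icc (θ - b) (θ + a) := by
    ext y
    simp only [mem_preimage, mem_Icc, hardThresh_neg]
    constructor <;> rintro ⟨h1, h2⟩ <;> constructor <;> linarith
  rw [cover_eq, cover_eq, ← map_neg_ν hn θ,
    Measure.map_apply measurable_neg ((ht_meas η) measurableSet_Icc), hs]

lemma iInf_swap {n : ℕ} (hn : 1 ≤ n) (η a b : ℝ) :
    (⨅ θ, cover n (hardThresh η) a b θ) = ⨅ θ, cover n (hardThresh η) b a θ := by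
  have h : (fun θ => cover n (hardThresh η) a b θ)
      = (fun θ => cover n (hardThresh η) b a θ) ∘ (fun θ : ℝ => -θ) :=
    funext fun θ => cover_swap hn η a b θ
  show sInf (Set.range fun θ => cover n (hardThresh η) a b θ)
    = sInf (Set.range fun θ => cover n (hardThresh η) b a θ)
  rw [h, Set.range_comp, neg_surjective.range_eq, Set.image_univ]
noncomputable def Fq (n : ℕ) (η a : ℝ) : ℝ :=
  stdNormCDF (Real.sqrt n * (a - η)) - stdNormCDF (-(Real.sqrt n * a))

lemma Fq_strictMono {n : ℕ} (hn : 1 ≤ n) (η : ℝ) : StrictMono (Fq n η) := by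
  intro x y hxy
  have hc := sqrtn_pos hn
  have h1 : stdNormCDF (Real.sqrt n * (x - η)) < stdNormCDF (Real.sqrt n * (y - η)) :=
    cdf_strictMono (by nlinarith)
  have h2 : stdNormCDF (-(Real.sqrt n * y)) < stdNormCDF (-(Real.sqrt n * x)) :=
    cdf_strictMono (by nlinarith)
  unfold Fq
  linarith

lemma Fq_cont {n : ℕ} {η : ℝ} : Continuous (Fq n η) := by
  apply Continuous.sub
  · exact cdf_continuous.comp (by continuity)
  · exact cdf_continuous.comp (by continuity)

lemma Fq_half {n : ℕ} (η : ℝ) : Fq n η (η / 2) = 0 := by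
  unfold Fq
  rw [show Real.sqrt n * (η / 2 - η) = -(Real.sqrt n * (η / 2)) from by ring, sub_self]

lemma Fq_tendsto {n : ℕ} (hn : 1 ≤ n) (η : ℝ) : Tendsto (Fq n η) atTop (𝓝 1) := by
  have hc := sqrtn_pos hn
  have hb : Tendsto (fun a : ℝ => Real.sqrt n * (a - η)) atTop atTop := by
    apply Tendsto.const_mul_atTop hc
    simpa [sub_eq_add_neg] using tendsto_atTop_add_const_right atTop (-η) tendsto_id
  have h1 : Tendsto (fun a : ℝ => stdNormCDF (Real.sqrt n * (a - η))) atTop (𝓝 1) :=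
    cdf_tendsto_atTop.comp hb
  have hb2 : Tendsto (fun a : ℝ => -(Real.sqrt n * a)) atTop atBot := by
    apply tendsto_neg_atTop_atBot.comp
    exact Tendsto.const_mul_atTop hc tendsto_id
  have h2 : Tendsto (fun a : ℝ => stdNormCDF (-(Real.sqrt n * a))) atTop (𝓝 0) :=
    cdf_tendsto_atBot.comp hb2
  have := h1.sub h2
  simp only [sub_zero] at this
  exact this

lemma exists_astar {n : ℕ} {η δ : ℝ} (hn : 1 ≤ n) (hη : 0 < η) (hδ0 : 0 < δ) (hδ1 : δ < 1) :
    ∃ astar : ℝ, 0 ≤ astar ∧ Fq n η astar = δ := by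
  have h0 : Fq n η 0 < δ := by
    have h := Fq_strictMono hn η (show (0:ℝ) < η / 2 by linarith)
    rw [Fq_half η] at h
    linarith
  obtain ⟨M, hM0, hMδ⟩ : ∃ M : ℝ, 0 ≤ M ∧ δ < Fq n η M := by
    have h := (Fq_tendsto hn η).eventually (eventually_gt_nhds hδ1)
    obtain ⟨M, hM⟩ := (h.and (eventually_ge_atTop 0)).exists
    exact ⟨M, hM.2, hM.1⟩
  obtain ⟨a, ha, hfa⟩ := intermediate_value_Icc hM0 Fq_cont.continuousOn ⟨h0.le, hMδ.le⟩
  exact ⟨a, ha.1, hfa⟩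

lemma min_core {n : ℕ} {η δ : ℝ} (hn : 1 ≤ n) (hη : 0 < η) (hδ0 : 0 < δ)
    {astar a b : ℝ} (hhalf : η / 2 < astar) (hδa : Fq n η astar = δ)
    (hab : a ≤ b)
    (hcov : ∀ θ, δ ≤ cover n (hardThresh η) a b θ) :
    astar + astar ≤ a + b ∧ (a + b = astar + astar → a = b) := by
  have hc := sqrtn_pos hn
  -- Step 1: limit bound at θ → (-a)⁻
  have hLa : δ ≤ max 0 (stdNormCDF (Real.sqrt n * (a - η))
      - stdNormCDF (Real.sqrt n * (-b))) := by
    by_contra hcon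
    push_neg at hcon
    set g : ℝ → ℝ := fun θ => max 0 (stdNormCDF (Real.sqrt n * (-η - θ))
      - stdNormCDF (Real.sqrt n * (-b))) with hg
    have hgc : ContinuousAt g (-a) := by
      apply Continuous.continuousAt
      exact continuous_const.max ((cdf_continuous.comp (by continuity)).sub continuous_const)
    have hgval : g (-a) = max 0 (stdNormCDF (Real.sqrt n * (a - η))
        - stdNormCDF (Real.sqrt n * (-b))) := by
      rw [hg]
      simp only
      rw [show -η - -a = a - η from by ring]
    set ε := δ - g (-a) with hεdef
    have hε : 0 < ε := by rw [hεdef, hgval]; linarith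
    obtain ⟨d, hd, hball⟩ := Metric.continuousAt_iff.mp hgc ε hε
    set θ0 := -a - d / 2 with hθ0
    have hdist : dist θ0 (-a) < d := by
      rw [Real.dist_eq, hθ0]
      rw [show -a - d / 2 - -a = -(d / 2) from by ring, abs_neg, abs_of_pos (by linarith)]
      linarith
    have hgθ0 : g θ0 < δ := by
      have := hball hdist
      rw [Real.dist_eq] at this
      have := abs_lt.mp this
      rw [hεdef] at this
      linarith [this.1, this.2]
    have hcovθ0 := hcov θ0
    have hup := cover_upper hn (a := a) (b := b) hη (show θ0 < -a by rw [hθ0]; linarith)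
    have hup' : cover n (hardThresh η) a b θ0 ≤ g θ0 := hup
    linarith
  -- Step 2: drop the max
  have hΛ : δ ≤ stdNormCDF (Real.sqrt n * (a - η)) - stdNormCDF (Real.sqrt n * (-b)) := by
    rcases le_max_iff.mp hLa with h | h
    · linarith
    · exact h
  -- Step 3: η ≤ a + b
  have hsum : η ≤ a + b := by
    by_contra hcon
    push_neg at hcon
    have : stdNormCDF (Real.sqrt n * (a - η)) ≤ stdNormCDF (Real.sqrt n * (-b)) :=
      cdf_mono (mul_le_mul_of_nonneg_left (by linarith) hc.le)
    linarith
  set m := (a + b) / 2 with hm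
  -- Step 4: spread comparison
  have hT : 0 ≤ Real.sqrt n * (m - a) := mul_nonneg hc.le (by rw [hm]; linarith)
  have hrp : Real.sqrt n * (-b) ≤ Real.sqrt n * (a - η) :=
    mul_le_mul_of_nonneg_left (by linarith) hc.le
  have hsum3 : Real.sqrt n * (a - η) + Real.sqrt n * (-b) + 2 * (Real.sqrt n * (m - a)) ≤ 0 := by
    have he : Real.sqrt n * (a - η) + Real.sqrt n * (-b) + 2 * (Real.sqrt n * (m - a))
        = Real.sqrt n * (-η) := by rw [hm]; ring
    rw [he]
    have : Real.sqrt n * (-η) ≤ Real.sqrt n * 0 := mul_le_mul_of_nonneg_left (by linarith) hc.le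
    simpa using this
  have hsp := spread hT hrp hsum3
  have e1 : Real.sqrt n * (-b) + Real.sqrt n * (m - a) = Real.sqrt n * (-m) := by
    rw [hm]; ring
  have e2 : Real.sqrt n * (a - η) + Real.sqrt n * (m - a) = Real.sqrt n * (m - η) := by
    rw [hm]; ring
  rw [e1, e2] at hsp
  have hFm : δ ≤ Fq n η m := by
    unfold Fq
    rw [← mul_neg]
    linarith
  have hma : astar ≤ m := by
    by_contra hcon
    push_neg at hcon
    have := Fq_strictMono hn η hcon
    rw [hδa] at this
    linarith
  constructor
  · rw [hm] at hma; linarith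
  · intro heq
    by_contra hne
    have hab' : a < b := lt_of_le_of_ne hab hne
    have hmm : m = astar := by rw [hm, heq]; ring
    have hT' : 0 < Real.sqrt n * (m - a) := by
      apply mul_pos hc
      rw [hm]; linarith
    have hrp' : Real.sqrt n * (-b) < Real.sqrt n * (a - η) := by
      apply (mul_lt_mul_iff_right₀ hc).mpr
      rw [hmm] at hm
      linarith
    have hsp' := spread_strict hT' hrp' hsum3
    rw [e1, e2] at hsp'
    have hFm' : δ < Fq n η m := by
      unfold Fq
      rw [← mul_neg]
      linarith
    rw [hmm, hδa] at hFm'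
    linarith

end Stmt7

open Stmt7 in
/-- Theorem 1(b): the shortest δ-level interval based on the hard-thresholding estimator. -/
theorem stmt_7 (n : ℕ) (hn : 1 ≤ n) (η : ℝ) (hη : 0 < η) (δ : ℝ) (hδ0 : 0 < δ)
    (hδ1 : δ < 1) :
    ∃ astar : ℝ, 0 ≤ astar ∧
      -- `astar` solves the equation
      stdNormCDF (Real.sqrt n * (astar - η)) - stdNormCDF (-(Real.sqrt n * astar)) = δ ∧
      -- and it is the unique nonnegative solution
      (∀ a : ℝ, 0 ≤ a →
        stdNormCDF (Real.sqrt n * (a - η)) - stdNormCDF (-(Real.sqrt n * a)) = δ →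
        a = astar) ∧
      -- it satisfies astar > η/2
      η / 2 < astar ∧
      -- the corresponding symmetric interval has infimal coverage probability exactly δ
      (⨅ θ : ℝ, cover n (hardThresh η) astar astar θ) = δ ∧
      -- among all intervals with infimal coverage probability ≥ δ,
      -- the length is minimized at (astar, astar) ...
      (∀ a b : ℝ, 0 ≤ a → 0 ≤ b →
        δ ≤ (⨅ θ : ℝ, cover n (hardThresh η) a b θ) →
        astar + astar ≤ a + b) ∧
      -- ... and uniquely so
      (∀ a b : ℝ, 0 ≤ a → 0 ≤ b →
        δ ≤ (⨅ θ : ℝ, cover n (hardThresh η) a b θ) →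
        a + b = astar + astar → a = astar ∧ b = astar) := by

  obtain ⟨astar, ha0, haeq⟩ := exists_astar hn hη hδ0 hδ1
  have hc := sqrtn_pos hn
  have hhalf : η / 2 < astar := by
    by_contra hcon
    push_neg at hcon
    have h := (Fq_strictMono hn η).monotone hcon
    rw [haeq, Fq_half η] at h
    linarith
  have hδa : stdNormCDF (Real.sqrt n * (astar - η)) - stdNormCDF (Real.sqrt n * (-astar))
      = δ := by rw [← haeq]; unfold Fq; rw [mul_neg]
  -- pointwise lower bound for the symmetric interval
  have hcase : ∀ θ, θ < -astar → δ ≤ cover n (hardThresh η) astar astar θ := by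
    intro θ hθ
    refine le_trans ?_ (cover_lower_left hn hη (by linarith) hθ)
    rw [hδa]
  have hlow : ∀ θ, δ ≤ cover n (hardThresh η) astar astar θ := by
    intro θ
    rcases lt_or_ge θ (-astar) with hθ | hθ1
    · exact hcase θ hθ
    rcases le_or_gt θ astar with hθ2 | hθ2
    · refine le_trans ?_ (cover_lower_mid hn hθ1 hθ2)
      have h1 : stdNormCDF (Real.sqrt n * (astar - η)) ≤ stdNormCDF (Real.sqrt n * astar) :=
        cdf_mono (mul_le_mul_of_nonneg_left (by linarith) hc.le)
      linarith
    · rw [cover_swap hn η astar astar θ]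
      exact hcase (-θ) (by linarith)
  refine ⟨astar, ha0, haeq, ?_, hhalf, ?_, ?_, ?_⟩
  · -- uniqueness of the solution
    intro a _ ha
    exact (Fq_strictMono hn η).injective (show Fq n η a = Fq n η astar from ha.trans haeq.symm)
  · -- infimum equals δ
    apply le_antisymm
    · apply le_of_forall_pos_le_add
      intro ε hε
      set g : ℝ → ℝ := fun θ => stdNormCDF (Real.sqrt n * (-η - θ)) with hgdef
      have hgc : ContinuousAt g (-astar) :=
        (cdf_continuous.comp (by continuity)).continuousAt
      obtain ⟨d, hd, hball⟩ := Metric.continuousAt_iff.mp hgc ε hε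
      set θ0 := -astar - d / 2 with hθ0
      have hθ0lt : θ0 < -astar := by rw [hθ0]; linarith
      have hdist : dist θ0 (-astar) < d := by
        rw [Real.dist_eq, hθ0, show -astar - d / 2 - -astar = -(d / 2) from by ring,
          abs_neg, abs_of_pos (by linarith)]
        linarith
      have h1 := cover_upper hn (a := astar) (b := astar) hη hθ0lt
      have h2 : g θ0 < g (-astar) + ε := by
        have := abs_lt.mp ((Real.dist_eq _ _) ▸ hball hdist)
        linarith [this.1, this.2]
      have h3 : g (-astar) = stdNormCDF (Real.sqrt n * (astar - η)) := by
        rw [hgdef]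
        simp only
        rw [show -η - -astar = astar - η from by ring]
      have h5 : max 0 (g θ0 - stdNormCDF (Real.sqrt n * (-astar))) ≤ δ + ε := by
        apply max_le (by linarith)
        rw [h3] at h2
        linarith
      have h1' : cover n (hardThresh η) astar astar θ0
          ≤ max 0 (g θ0 - stdNormCDF (Real.sqrt n * (-astar))) := h1
      exact le_trans (ciInf_le (cover_bddBelow _ _ _ _) θ0) (le_trans h1' h5)
    · exact le_ciInf hlow
  · -- length minimality
    intro a b h0a h0b hinf
    have hcov : ∀ θ, δ ≤ cover n (hardThresh η) a b θ :=
      fun θ => le_trans hinf (ciInf_le (cover_bddBelow _ _ _ _) θ)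
    rcases le_total a b with hab | hab
    · exact (min_core hn hη hδ0 hhalf haeq hab hcov).1
    · have hcov' : ∀ θ, δ ≤ cover n (hardThresh η) b a θ := by
        intro θ
        rw [cover_swap hn η b a θ]
        exact hcov (-θ)
      have := (min_core hn hη hδ0 hhalf haeq hab hcov').1
      linarith
  · -- uniqueness of the minimizer
    intro a b h0a h0b hinf hsum
    have hcov : ∀ θ, δ ≤ cover n (hardThresh η) a b θ :=
      fun θ => le_trans hinf (ciInf_le (cover_bddBelow _ _ _ _) θ)
    rcases le_total a b with hab | hab
    · have h := (min_core hn hη hδ0 hhalf haeq hab hcov).2 hsum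
      constructor <;> linarith
    · have hcov' : ∀ θ, δ ≤ cover n (hardThresh η) b a θ := by
        intro θ
        rw [cover_swap hn η b a θ]
        exact hcov (-θ)
      have h := (min_core hn hη hδ0 hhalf haeq hab hcov').2 (by linarith)
      constructor <;> linarith
end
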